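/- Let Y be a Young diagram and let j ≥ 1. Let Y⁺ be the set of cells Y ∪ {(colLen_Y(k), k) : 0 ≤ k < j}, i.e., Y with one extra box added at the bottom of each of its first j columns. Then (a) Y⁺ is again a Young diagram, and (b) the multiset of row lengths of Y⁺ equals the multiset of row lengths of Y together with one additional part equal to j; that is, Y⁺ is the Young diagram obtained from Y by inserting a row with j boxes. -/

import Mathlib

/-- Adding one box at the bottom of each of the first `j ≥ 1` columns of a
Young diagram `Y` produces again a Young diagram `Y⁺`, whose multiset of row lengths is
that of `Y` together with one additional part equal to `j`; i.e. `Y⁺` is obtained from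
`Y` by inserting a row with `j` boxes. -/
theorem youngDiagram_add_box_to_first_columns (Y : YoungDiagram) (j : ℕ) (hj : 1 ≤ j) :
    ∃ Yplus : YoungDiagram,
      (Yplus.cells : Set (ℕ × ℕ)) =
        (Y.cells : Set (ℕ × ℕ)) ∪ {p : ℕ × ℕ | ∃ k < j, p = (Y.colLen k, k)} ∧
      (Yplus.rowLens : Multiset ℕ) = (Y.rowLens : Multiset ℕ) + {j} := by
  classical
  set L := Y.rowLens with hLdef
  set m := Y.colLen j with hmdef
  have hmL : m ≤ L.length := by
    rw [hLdef, YoungDiagram.length_rowLens]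
    exact Y.colLen_anti 0 j (Nat.zero_le j)
  set w : List ℕ := L.take m ++ j :: L.drop m with hwdef
  have hlen : w.length = L.length + 1 := by
    simp only [hwdef, List.length_append, List.length_take, List.length_cons,
      List.length_drop]
    omega
  -- basic facts about row lengths
  have hrow_big : ∀ i, i < m → j < Y.rowLen i := fun i hi =>
    YoungDiagram.mem_iff_lt_rowLen.mp (YoungDiagram.mem_iff_lt_colLen.mpr hi)
  have hrow_small : ∀ i, m ≤ i → Y.rowLen i ≤ j := by
    intro i hi
    by_contra h
    exact absurd (YoungDiagram.mem_iff_lt_colLen.mp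
      (YoungDiagram.mem_iff_lt_rowLen.mpr (not_le.mp h))) (not_lt.mpr hi)
  have hLget : ∀ i (h : i < L.length), L[i] = Y.rowLen i := by
    intro i h
    simp only [hLdef]
    exact YoungDiagram.get_rowLens
  have hget : ∀ i (h : i < w.length),
      w[i] = if i < m then Y.rowLen i else if i = m then j else Y.rowLen (i - 1) := by
    intro i h
    have htl : (L.take m).length = m := by
      rw [List.length_take]; omega
    rcases lt_trichotomy i m with h1 | h1 | h1
    · simp only [hwdef]
      rw [List.getElem_append_left (by omega : i < (L.take m).length)]
      rw [List.getElem_take]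
      rw [hLget i (by omega)]
      simp [h1]
    · simp only [hwdef]
      rw [List.getElem_append_right (by omega : (L.take m).length ≤ i)]
      have h2 : i - (L.take m).length = 0 := by omega
      simp only [h2, List.getElem_cons_zero]
      simp [h1]
    · simp only [hwdef]
      rw [List.getElem_append_right (by omega : (L.take m).length ≤ i)]
      have h2 : i - (L.take m).length = (i - m - 1) + 1 := by omega
      have h3 : i - m - 1 < (L.drop m).length := by
        rw [List.length_drop]
        omega
      simp only [h2, List.getElem_cons_succ, List.getElem_drop]
      have h4 : m + (i - m - 1) = i - 1 := by omega
      simp only [h4]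
      rw [hLget (i - 1) (by omega)]
      rw [if_neg (by omega : ¬ i < m), if_neg (by omega : ¬ i = m)]
  -- sortedness
  have hsorted : w.Pairwise (· ≥ ·) := by
    rw [List.pairwise_iff_getElem]
    intro a b ha hb hab
    rw [hget a ha, hget b hb]
    have anti : ∀ i1 i2, i1 ≤ i2 → Y.rowLen i2 ≤ Y.rowLen i1 := Y.rowLen_anti
    split_ifs with h1 h2 h3 h4 h5 <;>
      first
        | (exact anti _ _ (by omega))
        | (exact le_of_lt (hrow_big a h1))
        | (exact (hrow_big a h1).le.trans (anti _ _ (by omega)) |>.symm ▸ le_refl _)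
        | (exact le_trans (hrow_small (b-1) (by omega)) (le_of_lt (hrow_big a h1)))
        | (exact hrow_small (b-1) (by omega))
        | omega
        | (exact hrow_small b (by omega))
  have hperm : List.Perm w (j :: L) := by
    have := List.perm_middle (a := j) (l₁ := L.take m) (l₂ := L.drop m)
    rw [List.take_append_drop] at this
    exact this
  have hpos : ∀ x ∈ w, 0 < x := by
    intro x hx
    rcases List.mem_cons.mp (hperm.mem_iff.mp hx) with h | h
    · omega
    · exact Y.pos_of_mem_rowLens x h
  refine ⟨YoungDiagram.ofRowLens w hsorted.sortedGE, ?_, ?_⟩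
  · ext p
    obtain ⟨i, k⟩ := p
    simp only [Finset.coe_mem, Set.mem_union, Set.mem_setOf_eq, Finset.mem_coe,
      YoungDiagram.mem_cells, YoungDiagram.mem_ofRowLens]
    constructor
    · rintro ⟨h, hk⟩
      rw [hget i h] at hk
      by_cases h1 : i < m
      · rw [if_pos h1] at hk
        exact Or.inl (YoungDiagram.mem_iff_lt_rowLen.mpr hk)
      · by_cases h2 : i = m
        · rw [if_neg h1, if_pos h2] at hk
          by_cases h3 : (i, k) ∈ Y
          · exact Or.inl h3
          · refine Or.inr ⟨k, hk, ?_⟩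
            have hle : Y.colLen k ≤ i := by
              rw [YoungDiagram.mem_iff_lt_colLen] at h3; omega
            have hge : m ≤ Y.colLen k := Y.colLen_anti k j (le_of_lt hk)
            have : i = Y.colLen k := by omega
            rw [this]
        · rw [if_neg h1, if_neg h2] at hk
          have hkj : k < j := lt_of_lt_of_le hk (hrow_small (i-1) (by omega))
          have hi1 : i - 1 < Y.colLen k :=
            YoungDiagram.mem_iff_lt_colLen.mp (YoungDiagram.mem_iff_lt_rowLen.mpr hk)
          by_cases h3 : (i, k) ∈ Y
          · exact Or.inl h3
          · refine Or.inr ⟨k, hkj, ?_⟩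
            have hle : Y.colLen k ≤ i := by
              rw [YoungDiagram.mem_iff_lt_colLen] at h3; omega
            have : i = Y.colLen k := by omega
            rw [this]
    · rintro (h | ⟨k', hk', hpk⟩)
      · have hik : i < Y.colLen k := YoungDiagram.mem_iff_lt_colLen.mp h
        have him : i < L.length := by
          rw [hLdef, YoungDiagram.length_rowLens]
          exact lt_of_lt_of_le hik (Y.colLen_anti 0 k (Nat.zero_le k))
        refine ⟨by omega, ?_⟩
        rw [hget i (by omega)]
        have hkr : k < Y.rowLen i := YoungDiagram.mem_iff_lt_rowLen.mp h
        by_cases h1 : i < m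
        · rwa [if_pos h1]
        · by_cases h2 : i = m
          · rw [if_neg h1, if_pos h2]
            exact lt_of_lt_of_le hkr (hrow_small i (by omega))
          · rw [if_neg h1, if_neg h2]
            exact lt_of_lt_of_le hkr (Y.rowLen_anti (i-1) i (by omega))
      · have h6 : k = k' := congrArg Prod.snd hpk
        subst h6
        have h5 : i = Y.colLen k := congrArg Prod.fst hpk
        have hge : m ≤ Y.colLen k := Y.colLen_anti k j (le_of_lt hk')
        have hle : Y.colLen k ≤ L.length := by
          rw [hLdef, YoungDiagram.length_rowLens]
          exact Y.colLen_anti 0 k (Nat.zero_le k)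
        refine ⟨by omega, ?_⟩
        rw [hget i (by omega)]
        by_cases h2 : i = m
        · rw [if_neg (by omega), if_pos h2]
          exact hk'
        · rw [if_neg (by omega), if_neg h2]
          have h7 : i - 1 < Y.colLen k := by omega
          exact YoungDiagram.mem_iff_lt_rowLen.mp (YoungDiagram.mem_iff_lt_colLen.mpr h7)
  · rw [YoungDiagram.rowLens_ofRowLens_eq_self hpos]
    have : (↑w : Multiset ℕ) = (↑(j :: L) : Multiset ℕ) :=
      Multiset.coe_eq_coe.mpr hperm
    rw [this, add_comm, Multiset.singleton_add, Multiset.cons_coe]
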